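/- Let G be a commutative ternary semigroup, X a real Banach space, and φ : G × G × G → [0,∞) a function such that for all x, y, z ∈ G the series φ̃(x,y,z) := (1/3)·∑_{n=0}^∞ 3^{-n} φ(x^{3^n}, y^{3^n}, z^{3^n}) converges and moreover 3^{-n} φ(x^{3^n}, y^{3^n}, z^{3^n}) → 0 as n → ∞. Suppose f : G → X satisfies ‖f([xyz]) − f(x) − f(y) − f(z)‖ ≤ φ(x,y,z) for all x, y, z ∈ G. Then the map T : G → X defined by T(x) = lim_{n→∞} 3^{-n} f(x^{3^n}) satisfies T([xyz]) = T(x) + T(y) + T(z) for all x, y, z ∈ G. -/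
import Mathlib


open Filter Topology

/-- Iterated cube: `cubeIter op x n = x^{3^n}` where `x³ = op x x x`. -/
def cubeIter {G : Type*} (op : G → G → G → G) (x : G) : ℕ → G
  | 0 => x
  | n + 1 => op (cubeIter op x n) (cubeIter op x n) (cubeIter op x n)

lemma cube_op {G : Type*} (op : G → G → G → G)
    (assoc : ∀ x y z u v : G,
      op (op x y z) u v = op x (op y z u) v ∧
      op x (op y z u) v = op x y (op z u v))
    (comm : ∀ x y z : G,
      op x y z = op x z y ∧ op x y z = op y x z ∧ op x y z = op y z x ∧
      op x y z = op z x y ∧ op x y z = op z y x)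
    (x y z : G) :
    op (op x y z) (op x y z) (op x y z) = op (op x x x) (op y y y) (op z z z) := by
  have A1 : ∀ a b c u v : G, op (op a b c) u v = op a b (op c u v) := fun a b c u v =>
    (assoc a b c u v).1.trans (assoc a b c u v).2
  have L : ∀ w : G, op x y (op x y w) = op x x (op y y w) := by
    intro w
    rw [← A1, (comm x y x).1, A1]
  have L' : ∀ w : G, op y y (op x y w) = op x (op y y y) w := by
    intro w
    rw [← A1, (comm y y x).2.2.2.1, (assoc x y y y w).1]
  calc op (op x y z) (op x y z) (op x y z)
      = op x y (op z (op x y z) (op x y z)) := A1 x y z _ _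
    _ = op x y (op (op x y z) z (op x y z)) := by rw [(comm z (op x y z) (op x y z)).2.1]
    _ = op x y (op x y (op z z (op x y z))) := by rw [A1]
    _ = op x y (op x y (op (op x y z) z z)) := by rw [(comm z z (op x y z)).2.2.2.1]
    _ = op x y (op x y (op x y (op z z z))) := by rw [A1]
    _ = op x x (op y y (op x y (op z z z))) := L _
    _ = op x x (op x (op y y y) (op z z z)) := by rw [L']
    _ = op (op x x x) (op y y y) (op z z z) := by rw [← A1]

lemma cubeIter_op {G : Type*} (op : G → G → G → G)
    (assoc : ∀ x y z u v : G,
      op (op x y z) u v = op x (op y z u) v ∧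
      op x (op y z u) v = op x y (op z u v))
    (comm : ∀ x y z : G,
      op x y z = op x z y ∧ op x y z = op y x z ∧ op x y z = op y z x ∧
      op x y z = op z x y ∧ op x y z = op z y x)
    (x y z : G) :
    ∀ n, cubeIter op (op x y z) n =
      op (cubeIter op x n) (cubeIter op y n) (cubeIter op z n)
  | 0 => rfl
  | n + 1 => by
      simp only [cubeIter, cubeIter_op op assoc comm x y z n]
      exact cube_op op assoc comm _ _ _

theorem stmt_2 {G : Type*} (op : G → G → G → G)
    (assoc : ∀ x y z u v : G,
      op (op x y z) u v = op x (op y z u) v ∧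
      op x (op y z u) v = op x y (op z u v))
    (comm : ∀ x y z : G,
      op x y z = op x z y ∧ op x y z = op y x z ∧ op x y z = op y z x ∧
      op x y z = op z x y ∧ op x y z = op z y x)
    {X : Type*} [NormedAddCommGroup X] [NormedSpace ℝ X] [CompleteSpace X]
    (φ : G → G → G → ℝ) (hφ : ∀ x y z, 0 ≤ φ x y z)
    (hconv : ∀ x y z : G, Summable (fun n : ℕ =>
      ((1 : ℝ) / 3) ^ n * φ (cubeIter op x n) (cubeIter op y n) (cubeIter op z n)))
    (hlim : ∀ x y z : G, Tendsto (fun n : ℕ =>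
      ((1 : ℝ) / 3) ^ n * φ (cubeIter op x n) (cubeIter op y n) (cubeIter op z n))
      atTop (𝓝 0))
    (f : G → X)
    (hf : ∀ x y z : G, ‖f (op x y z) - f x - f y - f z‖ ≤ φ x y z)
    (T : G → X)
    (hT : ∀ x : G, Tendsto (fun n : ℕ => ((1 : ℝ) / 3) ^ n • f (cubeIter op x n))
      atTop (𝓝 (T x))) :
    ∀ x y z : G, T (op x y z) = T x + T y + T z := by
  intro x y z
  set a : ℕ → X := fun n => ((1 : ℝ) / 3) ^ n • f (cubeIter op (op x y z) n) with ha
  set b : ℕ → X := fun n => ((1 : ℝ) / 3) ^ n • f (cubeIter op x n)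
    + ((1 : ℝ) / 3) ^ n • f (cubeIter op y n)
    + ((1 : ℝ) / 3) ^ n • f (cubeIter op z n) with hb
  have hbound : ∀ n, ‖a n - b n‖ ≤
      ((1 : ℝ) / 3) ^ n * φ (cubeIter op x n) (cubeIter op y n) (cubeIter op z n) := by
    intro n
    have : a n - b n = ((1 : ℝ) / 3) ^ n •
        (f (op (cubeIter op x n) (cubeIter op y n) (cubeIter op z n))
          - f (cubeIter op x n) - f (cubeIter op y n) - f (cubeIter op z n)) := by
      simp only [ha, hb, cubeIter_op op assoc comm, smul_sub]
      abel
    rw [this, norm_smul, Real.norm_eq_abs, abs_of_nonneg (by positivity)]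
    exact mul_le_mul_of_nonneg_left (hf _ _ _) (by positivity)
  have hsub : Tendsto (fun n => a n - b n) atTop (𝓝 0) :=
    squeeze_zero_norm hbound (hlim x y z)
  have hA : Tendsto a atTop (𝓝 (T (op x y z))) := hT _
  have hB : Tendsto b atTop (𝓝 (T x + T y + T z)) := ((hT x).add (hT y)).add (hT z)
  have := tendsto_nhds_unique (hA.sub hB) hsub
  exact sub_eq_zero.mp this
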